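/- Let m ≥ 2 and n ≥ 0 be integers, and let A_{i,j,n+1}(z) (1 ≤ i ≤ m, 0 ≤ j ≤ m−1) be the polynomials from the Padé construction for powers of log. Put Δ^{(n+1)}(z) = det( A_{i,j,n+1}(z) )_{1≤i≤m, 0≤j≤m−1}. Then there exists γ ∈ ℚ \ {0} such that Δ^{(n+1)}(z) = γ · z^{m(n+1)}. In particular, Δ^{(n+1)}(α) ≠ 0 for every nonzero algebraic number α. -/

import Mathlib

set_option maxHeartbeats 1600000


/-- `a i h j` (for `1 ≤ i ≤ m`, `0 ≤ h ≤ n+1`, `1 ≤ j ≤ m`) are the partial fraction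
coefficients of `1/Q_{m,i,n+1}(x)` where `Q_{m,i,n+1}(x) = (∏_{h=0}^n (x−h)^m)·(x−(n+1))^i`. -/
def IsPFD (m n : ℕ) (a : ℕ → ℕ → ℕ → ℚ) : Prop :=
  ∀ i : ℕ, 1 ≤ i → i ≤ m → ∀ x : ℚ, (∀ h : ℕ, h ≤ n + 1 → x ≠ (h : ℚ)) →
    ((∏ h ∈ Finset.range (n + 1), (x - (h : ℚ)) ^ m) * (x - ((n + 1 : ℕ) : ℚ)) ^ i)⁻¹ =
      ∑ h ∈ Finset.range (n + 2), ∑ j ∈ Finset.range m,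
        a i h (j + 1) / (x - (h : ℚ)) ^ (j + 1)

/-- The polynomial `A_{i,j,n+1}(z) = (Σ_{h=0}^{n+1} a_{h,j+1}^{(i)} (1+z)^h)/j!`. -/
noncomputable def padeA (n : ℕ) (a : ℕ → ℕ → ℕ → ℚ) (i j : ℕ) : Polynomial ℚ :=
  Polynomial.C ((j.factorial : ℚ))⁻¹ *
    ∑ h ∈ Finset.range (n + 2), Polynomial.C (a i h (j + 1)) * (1 + Polynomial.X) ^ h

open Finset Polynomial

lemma det_updCol_sum {R : Type*} [CommRing R] {k : ℕ} (A : Matrix (Fin k) (Fin k) R)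
    (c : Fin k) {ι : Type*} (s : Finset ι) (f : ι → Fin k → R) :
    (A.updateCol c (fun i => ∑ x ∈ s, f x i)).det
      = ∑ x ∈ s, (A.updateCol c (f x)).det := by
  classical
  induction s using Finset.induction_on with
  | empty =>
    simp only [Finset.sum_empty]
    have h0 : (fun _ : Fin k => (0:R)) = (0:R) • (fun _ : Fin k => (0:R)) := by
      funext i; simp
    rw [h0, Matrix.det_updateCol_smul, zero_mul]
  | insert x s' hx ih =>
    rw [Finset.sum_insert hx]
    have h1 : (fun i => ∑ y ∈ insert x s', f y i)
        = f x + fun i => ∑ y ∈ s', f y i := by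
      funext i; simp [Finset.sum_insert hx]
    rw [h1, Matrix.det_updateCol_add, ih]



lemma pfd_reflect (m n i : ℕ) (hi1 : 1 ≤ i) (him : i ≤ m) (a : ℕ → ℕ → ℕ → ℚ)
    (hq : ∀ x : ℚ, (∀ h : ℕ, h ≤ n + 1 → x ≠ (h : ℚ)) →
      ((∏ h ∈ Finset.range (n + 1), (x - (h : ℚ)) ^ m) * (x - ((n + 1 : ℕ) : ℚ)) ^ i)⁻¹ =
        ∑ h ∈ Finset.range (n + 2), ∑ j ∈ Finset.range m,
          a i h (j + 1) / (x - (h : ℚ)) ^ (j + 1)) :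
    (X : ℚ[X]) ^ (m*(n+1)+i) * (1 - C ((n+1 : ℕ) : ℚ) * X) ^ (m - i)
      = ∑ h ∈ range (n+2), ∑ j ∈ range m, C (a i h (j+1)) *
          (X^(j+1) * (1 - C ((h : ℕ):ℚ) * X)^(m-1-j) *
            ∏ h' ∈ (range (n+2)).erase h, (1 - C ((h' : ℕ):ℚ) * X)^m) := by
  apply eq_of_infinite_eval_eq
  have hfin : (↑(insert (0:ℚ) ((range (n+2)).image (fun h => ((h:ℕ):ℚ)⁻¹))) : Set ℚ).Finite :=
    Finset.finite_toSet _
  apply Set.Infinite.mono _ hfin.infinite_compl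
  intro y hy
  simp only [Set.mem_compl_iff, Finset.coe_insert, Set.mem_insert_iff, Finset.mem_coe,
    Finset.mem_image, Finset.mem_range, not_or, not_exists, not_and] at hy
  obtain ⟨hy0, hyh⟩ := hy
  set x : ℚ := y⁻¹ with hxdef
  have hxh : ∀ h : ℕ, h ≤ n + 1 → x ≠ (h : ℚ) := by
    intro h hh hx
    rcases Nat.eq_zero_or_pos h with h0 | hpos
    · rw [h0] at hx; simp only [Nat.cast_zero] at hx
      exact hy0 (inv_eq_zero.mp hx)
    · have hy' : y = ((h:ℕ):ℚ)⁻¹ := by rw [← hx, hxdef, inv_inv]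
      exact hyh h (by omega) hy'.symm
  have hsub : ∀ h : ℕ, h ≤ n + 1 → x - (h:ℚ) ≠ 0 := by
    intro h hh; exact sub_ne_zero_of_ne (hxh h hh)
  have key : ∀ h : ℕ, h ≤ n + 1 → 1 - ((h:ℕ):ℚ) * y = y * (x - h) := by
    intro h hh
    rw [mul_sub, hxdef, mul_inv_cancel₀ hy0]; ring
  simp only [Set.mem_setOf_eq, eval_mul, eval_pow, eval_sub, eval_one, eval_C, eval_X,
    eval_finset_sum, eval_prod]
  set T : ℚ := y^(m*(n+2)) * ∏ h' ∈ range (n+2), (x - (h':ℚ))^m with hT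
  have hterm : ∀ h ∈ range (n+2), ∀ j ∈ range m,
      a i h (j+1) * (y^(j+1) * (1 - ((h:ℕ):ℚ)*y)^(m-1-j) *
        ∏ h' ∈ (range (n+2)).erase h, (1 - ((h':ℕ):ℚ)*y)^m)
      = a i h (j+1) / (x - (h:ℚ))^(j+1) * T := by
    intro h hh j hj
    rw [mem_range] at hh hj
    have hhle : h ≤ n + 1 := by omega
    obtain ⟨p, hp⟩ : ∃ p, m = (j+1) + p := ⟨m - (j+1), by omega⟩
    have hm1j : m - 1 - j = p := by omega
    rw [key h hhle, hm1j]
    rw [Finset.prod_congr rfl (fun h' hh' => by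
      rw [key h' (by rw [Finset.mem_erase, mem_range] at hh'; omega)])]
    rw [div_mul_eq_mul_div, eq_div_iff (pow_ne_zero _ (hsub h hhle))]
    rw [hT, ← Finset.mul_prod_erase _ _ (mem_range.mpr hh)]
    have hcard : ((range (n+2)).erase h).card = n + 1 := by
      rw [Finset.card_erase_of_mem (mem_range.mpr hh), Finset.card_range]
      omega
    have hprodsplit : ∏ h' ∈ (range (n+2)).erase h, (y * (x - (h':ℚ)))^m
        = y^(m*(n+1)) * ∏ h' ∈ (range (n+2)).erase h, (x - (h':ℚ))^m := by
      simp only [mul_pow, Finset.prod_mul_distrib, Finset.prod_const, hcard, ← pow_mul]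
    rw [hprodsplit]
    have hy2 : y^(m*(n+2)) = y^(j+1) * y^p * y^(m*(n+1)) := by
      rw [show m*(n+2) = (j+1) + p + m*(n+1) by
        have : m*(n+2) = m + m*(n+1) := by ring
        omega, pow_add, pow_add]
    have hx2 : (x - (h:ℚ))^m = (x - (h:ℚ))^p * (x - (h:ℚ))^(j+1) := by
      rw [show m = p + (j+1) by omega, pow_add]
    rw [hy2, hx2, mul_pow]
    ring
  rw [Finset.sum_congr rfl (fun h hh => Finset.sum_congr rfl (fun j hj => hterm h hh j hj))]
  rw [Finset.sum_congr rfl (fun h _ => (Finset.sum_mul (range m) _ T).symm), ← Finset.sum_mul,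
    ← hq x hxh]
  obtain ⟨q, hqm⟩ : ∃ q, m = i + q := ⟨m - i, by omega⟩
  have hmi : m - i = q := by omega
  have hTsplit : (∏ h' ∈ range (n+2), (x - (h':ℚ))^m)
      = (∏ h ∈ range (n+1), (x - (h:ℚ))^m) * (x - ((n+1:ℕ):ℚ))^m := by
    exact_mod_cast Finset.prod_range_succ (fun h' => (x - (h':ℚ))^m) (n+1)
  rw [key (n+1) le_rfl, hmi, hT, hTsplit]
  have hP : (∏ h ∈ range (n+1), (x - (h:ℚ))^m) ≠ 0 :=
    Finset.prod_ne_zero_iff.mpr fun h hh => pow_ne_zero _ (hsub h (by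
      rw [mem_range] at hh; omega))
  have hxn : x - ((n+1:ℕ):ℚ) ≠ 0 := hsub (n+1) le_rfl
  have hsplit1 : (x - ((n+1:ℕ):ℚ))^m = (x - ((n+1:ℕ):ℚ))^i * (x - ((n+1:ℕ):ℚ))^q := by
    rw [hqm, pow_add]
  have hsplit2 : y^(m*(n+2)) = y^(m*(n+1)+i) * y^q := by
    rw [← pow_add, show m*(n+1)+i+q = m*(n+2) by
      have : m*(n+2) = m + m*(n+1) := by ring
      omega]
  rw [hsplit1, hsplit2, mul_pow, eq_comm,
    inv_mul_eq_iff_eq_mul₀ (mul_ne_zero hP (pow_ne_zero _ hxn))]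
  ring


lemma pfd_shift (m n i : ℕ) (hi1 : 1 ≤ i) (him : i ≤ m) (a : ℕ → ℕ → ℕ → ℚ)
    (hq : ∀ x : ℚ, (∀ h : ℕ, h ≤ n + 1 → x ≠ (h : ℚ)) →
      ((∏ h ∈ Finset.range (n + 1), (x - (h : ℚ)) ^ m) * (x - ((n + 1 : ℕ) : ℚ)) ^ i)⁻¹ =
        ∑ h ∈ Finset.range (n + 2), ∑ j ∈ Finset.range m,
          a i h (j + 1) / (x - (h : ℚ)) ^ (j + 1)) :
    (X : ℚ[X])^(m-i) =
      (∑ j ∈ range m, (C (a i (n+1) (j+1)) *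
          ∏ h' ∈ range (n+1), (X + C (((n+1-h' : ℕ)):ℚ))^m) * X^(m-1-j))
      + (∑ h ∈ range (n+1), ∑ j ∈ range m, C (a i h (j+1)) *
          ((X + C (((n+1-h : ℕ)):ℚ))^(m-1-j) *
            ∏ h' ∈ (range (n+1)).erase h, (X + C (((n+1-h' : ℕ)):ℚ))^m)) * X^m := by
  apply eq_of_infinite_eval_eq
  have hfin : (↑((range (n+2)).image (fun h => ((h:ℕ):ℚ) - ((n+1:ℕ):ℚ))) : Set ℚ).Finite :=
    Finset.finite_toSet _
  apply Set.Infinite.mono _ hfin.infinite_compl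
  intro u hu
  simp only [Set.mem_compl_iff, Finset.mem_coe, Finset.mem_image, Finset.mem_range,
    not_exists, not_and] at hu
  set x : ℚ := u + ((n+1:ℕ):ℚ) with hxdef
  have hxh : ∀ h : ℕ, h ≤ n + 1 → x ≠ (h : ℚ) := by
    intro h hh hx
    exact hu h (by omega) (by rw [← hx, hxdef]; ring)
  have hsub : ∀ h : ℕ, h ≤ n + 1 → x - (h:ℚ) ≠ 0 := fun h hh => sub_ne_zero_of_ne (hxh h hh)
  have hcast : ∀ h' : ℕ, h' ≤ n + 1 → u + (((n+1-h' : ℕ)):ℚ) = x - (h':ℚ) := by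
    intro h' hh'
    rw [Nat.cast_sub (by omega : h' ≤ n+1), hxdef]
    push_cast
    ring
  have hu0 : x - ((n+1:ℕ):ℚ) = u := by rw [hxdef]; ring
  have hune : u ≠ 0 := by
    intro h0
    exact hsub (n+1) le_rfl (by rw [hu0, h0])
  simp only [Set.mem_setOf_eq, eval_add, eval_mul, eval_pow, eval_finset_sum, eval_prod,
    eval_C, eval_X]
  set T : ℚ := ∏ h' ∈ range (n+2), (x - (h':ℚ))^m with hT
  have hTsplit : T = (∏ h' ∈ range (n+1), (x - (h':ℚ))^m) * u^m := by
    rw [hT, ← hu0]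
    exact_mod_cast Finset.prod_range_succ (fun h' => (x - (h':ℚ))^m) (n+1)
  -- group 1 : h = n+1
  have hg1 : ∀ j ∈ range m,
      (a i (n+1) (j+1) * ∏ h' ∈ range (n+1), (u + (((n+1-h' : ℕ)):ℚ))^m) * u^(m-1-j)
        = a i (n+1) (j+1) / (x - ((n+1:ℕ):ℚ))^(j+1) * T := by
    intro j hj
    rw [mem_range] at hj
    rw [Finset.prod_congr rfl (fun h' hh' => by
      rw [hcast h' (by rw [mem_range] at hh'; omega)]), hu0, hTsplit,
      div_mul_eq_mul_div, eq_div_iff (pow_ne_zero _ hune),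
      show u^m = u^(m-1-j) * u^(j+1) by rw [← pow_add]; congr 1; omega]
    ring
  -- group 2 : h ≤ n
  have hg2 : ∀ h ∈ range (n+1), ∀ j ∈ range m,
      a i h (j+1) * ((u + (((n+1-h : ℕ)):ℚ))^(m-1-j) *
          ∏ h' ∈ (range (n+1)).erase h, (u + (((n+1-h' : ℕ)):ℚ))^m) * u^m
        = a i h (j+1) / (x - (h:ℚ))^(j+1) * T := by
    intro h hh j hj
    rw [mem_range] at hh hj
    rw [hcast h (by omega), Finset.prod_congr rfl (fun h' hh' => by
      rw [hcast h' (by rw [Finset.mem_erase, mem_range] at hh'; omega)]),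
      hTsplit, ← Finset.mul_prod_erase _ _ (mem_range.mpr (by omega : h < n+1)),
      div_mul_eq_mul_div, eq_div_iff (pow_ne_zero _ (hsub h (by omega))),
      show (x - (h:ℚ))^m = (x - (h:ℚ))^(m-1-j) * (x - (h:ℚ))^(j+1) by
        rw [← pow_add]; congr 1; omega]
    ring
  rw [Finset.sum_congr rfl hg1, Finset.sum_mul,
    Finset.sum_congr rfl (fun h _ => Finset.sum_mul (range m) _ (u^m)),
    Finset.sum_congr rfl (fun h hh => Finset.sum_congr rfl (fun j hj => hg2 h hh j hj))]
  rw [Finset.sum_congr rfl (fun h (_ : h ∈ range (n+1)) =>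
      (Finset.sum_mul (range m) (fun j => a i h (j+1) / (x - (h:ℚ))^(j+1)) T).symm),
    ← (Finset.sum_mul (range m) (fun j => a i (n+1) (j+1) / (x - ((n+1:ℕ):ℚ))^(j+1)) T),
    ← Finset.sum_mul,
    add_comm ((∑ j ∈ range m, a i (n+1) (j+1) / (x - ((n+1:ℕ):ℚ))^(j+1)) * T) _, ← add_mul,
    ← Finset.sum_range_succ (fun h => ∑ j ∈ range m, a i h (j+1) / (x - (h:ℚ))^(j+1)) (n+1)]
  rw [show (∑ h ∈ range (n+2), ∑ j ∈ range m, a i h (j + 1) / (x - (h:ℚ)) ^ (j + 1))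
    = ((∏ h ∈ Finset.range (n + 1), (x - (h : ℚ)) ^ m) * (x - ((n + 1 : ℕ) : ℚ)) ^ i)⁻¹ from
      (hq x hxh).symm]
  have hP : (∏ h ∈ range (n+1), (x - (h:ℚ))^m) ≠ 0 :=
    Finset.prod_ne_zero_iff.mpr fun h hh => pow_ne_zero _ (hsub h (by
      rw [mem_range] at hh; omega))
  rw [hTsplit, hu0, eq_comm, inv_mul_eq_iff_eq_mul₀ (mul_ne_zero hP (pow_ne_zero _ hune)),
    show u^m = u^i * u^(m-i) by rw [← pow_add]; congr 1; omega]
  ring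

lemma prod_desc (N : ℕ) : ∏ h' ∈ Finset.range N, (N - h') = N.factorial := by
  induction N with
  | zero => simp
  | succ N ih =>
    rw [Finset.prod_range_succ' (fun h' => N + 1 - h')]
    simp only [Nat.succ_sub_succ_eq_sub, Nat.sub_zero]
    rw [ih, Nat.factorial_succ]; ring

section
variable (m n i : ℕ) (a : ℕ → ℕ → ℕ → ℚ)

lemma a_top (hi1 : 1 ≤ i) (him : i ≤ m)
    (hid : (X : ℚ[X])^(m-i) =
      (∑ j ∈ range m, (C (a i (n+1) (j+1)) *
          ∏ h' ∈ range (n+1), (X + C (((n+1-h' : ℕ)):ℚ))^m) * X^(m-1-j))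
      + (∑ h ∈ range (n+1), ∑ j ∈ range m, C (a i h (j+1)) *
          ((X + C (((n+1-h : ℕ)):ℚ))^(m-1-j) *
            ∏ h' ∈ (range (n+1)).erase h, (X + C (((n+1-h' : ℕ)):ℚ))^m)) * X^m) :
    (∀ j0, i ≤ j0 → j0 < m → a i (n+1) (j0+1) = 0) ∧
      a i (n+1) i = ((((n+1).factorial : ℚ))^m)⁻¹ := by
  set G : ℚ[X] := ∏ h' ∈ range (n+1), (X + C (((n+1-h' : ℕ)):ℚ))^m with hGdef
  have hG0 : G.coeff 0 = (((n+1).factorial : ℚ))^m := by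
    rw [Polynomial.coeff_zero_eq_eval_zero, hGdef]
    simp only [eval_prod, eval_pow, eval_add, eval_X, eval_C, zero_add]
    rw [Finset.prod_pow, ← Nat.cast_prod, prod_desc]
  have hG0ne : G.coeff 0 ≠ 0 := by
    rw [hG0]
    exact pow_ne_zero _ (Nat.cast_ne_zero.mpr (Nat.factorial_ne_zero _))
  -- coefficient extraction
  have hco : ∀ l, l < m →
      (if l = m - i then (1:ℚ) else 0) =
        ∑ j ∈ range m, (if m - 1 - j ≤ l then
          a i (n+1) (j+1) * G.coeff (l - (m-1-j)) else 0) := by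
    intro l hl
    have h2 := congrArg (fun p : ℚ[X] => p.coeff l) hid
    have hml : ¬ m ≤ l := by omega
    simp only [coeff_X_pow, coeff_add, finset_sum_coeff, coeff_mul_X_pow', coeff_C_mul,
      hml, if_false, add_zero] at h2
    exact h2
  have claim0 : ∀ j0, i ≤ j0 → j0 < m → a i (n+1) (j0+1) = 0 := by
    have main : ∀ t j0, i ≤ j0 → j0 < m → m - 1 - j0 = t → a i (n+1) (j0+1) = 0 := by
      intro t
      induction t using Nat.strong_induction_on with
      | _ t IH =>
        intro j0 hij0 hj0m ht
        have h1 := hco (m - 1 - j0) (by omega)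
        rw [if_neg (by omega)] at h1
        rw [Finset.sum_eq_single j0 (fun j hj hne => ?_) (fun habs => absurd (mem_range.mpr hj0m) habs)] at h1
        · rw [if_pos (by omega), Nat.sub_self] at h1
          exact (mul_eq_zero.mp h1.symm).resolve_right hG0ne
        · rw [mem_range] at hj
          rcases lt_or_gt_of_ne hne with hlt | hgt
          · exact if_neg (by omega)
          · rw [if_pos (by omega), IH (m-1-j) (by omega) j (by omega) (by omega) rfl, zero_mul]
    exact fun j0 h1 h2 => main (m-1-j0) j0 h1 h2 rfl
  refine ⟨claim0, ?_⟩
  have h1 := hco (m - i) (by omega)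
  rw [if_pos rfl] at h1
  rw [Finset.sum_eq_single (i-1) (fun j hj hne => ?_)
    (fun habs => absurd (mem_range.mpr (by omega : i-1 < m)) habs)] at h1
  · rw [if_pos (by omega), show m - i - (m - 1 - (i-1)) = 0 by omega,
      show i - 1 + 1 = i by omega] at h1
    rw [eq_comm] at h1
    field_simp [hG0ne] at h1 ⊢
    rw [← h1, hG0]
  · rw [mem_range] at hj
    rcases lt_or_gt_of_ne hne with hlt | hgt
    · exact if_neg (by omega)
    · rw [if_pos (by omega), claim0 j (by omega) (by omega), zero_mul]
end

noncomputable def Wser (h j : ℕ) : PowerSeries ℚ :=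
  PowerSeries.rescale ((h:ℕ):ℚ) (PowerSeries.mk fun d => (((j+d).choose j : ℕ) : ℚ))

lemma rescale_one_sub (h : ℚ) :
    PowerSeries.rescale h (1 - PowerSeries.X) = 1 - PowerSeries.C h * PowerSeries.X := by
  ext d
  rw [PowerSeries.coeff_rescale]
  rcases d with _ | d
  · simp
  rcases d with _ | d
  · simp [PowerSeries.coeff_one, PowerSeries.coeff_X, PowerSeries.coeff_C_mul]
  · simp [PowerSeries.coeff_one, PowerSeries.coeff_X, PowerSeries.coeff_C_mul]

lemma Wser_inv (h j : ℕ) :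
    Wser h j * (1 - PowerSeries.C ((h:ℕ):ℚ) * PowerSeries.X)^(j+1) = 1 := by
  have base := PowerSeries.mk_add_choose_mul_one_sub_pow_eq_one (S := ℚ) (d := j)
  have := congrArg (PowerSeries.rescale ((h:ℕ):ℚ)) base
  rwa [map_mul, map_pow, map_one, rescale_one_sub] at this
  
lemma coeff_Wser (h j d : ℕ) :
    PowerSeries.coeff d (Wser h j) = ((h:ℕ):ℚ)^d * ((j+d).choose j : ℕ) := by
  rw [Wser, PowerSeries.coeff_rescale, PowerSeries.coeff_mk]

section
variable (m n i : ℕ)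

noncomputable def oneSubU (h : ℕ) : (PowerSeries ℚ)ˣ where
  val := 1 - PowerSeries.C ((h:ℕ):ℚ) * PowerSeries.X
  inv := Wser h 0
  val_inv := by rw [mul_comm]; simpa using Wser_inv h 0
  inv_val := by simpa using Wser_inv h 0

lemma moments (hi1 : 1 ≤ i) (him : i ≤ m) (a : ℕ → ℕ → ℕ → ℚ)
    (hrefl : (X : ℚ[X]) ^ (m*(n+1)+i) * (1 - C ((n+1 : ℕ) : ℚ) * X) ^ (m - i)
      = ∑ h ∈ range (n+2), ∑ j ∈ range m, C (a i h (j+1)) *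
          (X^(j+1) * (1 - C ((h : ℕ):ℚ) * X)^(m-1-j) *
            ∏ h' ∈ (range (n+2)).erase h, (1 - C ((h' : ℕ):ℚ) * X)^m)) :
    ∀ k, k < m*(n+1) →
      ∑ h ∈ range (n+2), ∑ j ∈ range m,
        a i h (j+1) * (k.choose j : ℕ) * ((h:ℕ):ℚ)^(k-j) = 0 := by
  intro k hk
  set S : PowerSeries ℚ := ∑ h ∈ range (n+2), ∑ j ∈ range m,
    PowerSeries.C (a i h (j+1)) * (PowerSeries.X^(j+1) * Wser h j) with hSdef
  set U : (PowerSeries ℚ)ˣ := ∏ h' ∈ range (n+2), (oneSubU h')^m with hUdef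
  have hUval : (U : PowerSeries ℚ)
      = ∏ h' ∈ range (n+2), (1 - PowerSeries.C ((h':ℕ):ℚ) * PowerSeries.X)^m := by
    rw [hUdef]
    have h2 : (Units.coeHom (PowerSeries ℚ)) (∏ h' ∈ range (n+2), (oneSubU h')^m)
        = ∏ h' ∈ range (n+2), ((oneSubU h' : PowerSeries ℚ))^m := by
      rw [map_prod]
      exact Finset.prod_congr rfl fun h' _ => map_pow _ _ _
    exact h2.trans (Finset.prod_congr rfl fun h' _ => rfl)
  -- map the polynomial identity to power series
  have hps := congrArg (Polynomial.coeToPowerSeries.ringHom (R := ℚ)) hrefl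
  simp only [map_mul, map_pow, map_sum, map_sub, map_one, map_prod,
    Polynomial.coeToPowerSeries.ringHom_apply, Polynomial.coe_X, Polynomial.coe_C] at hps
  -- S * U = RHS
  have hSU : S * (U : PowerSeries ℚ)
      = PowerSeries.X ^ (m*(n+1)+i)
          * (1 - PowerSeries.C ((n+1 : ℕ) : ℚ) * PowerSeries.X) ^ (m - i) := by
    rw [hSdef, Finset.sum_mul]
    have hterm : ∀ h ∈ range (n+2), ∀ j ∈ range m,
        PowerSeries.C (a i h (j+1)) * (PowerSeries.X^(j+1) * Wser h j) *
            (1 - PowerSeries.C ((h:ℕ):ℚ) * PowerSeries.X)^m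
          = PowerSeries.C (a i h (j+1)) *
            (PowerSeries.X^(j+1)
              * (1 - PowerSeries.C ((h:ℕ):ℚ) * PowerSeries.X)^(m-1-j)) := by
      intro h hh j hj
      rw [mem_range] at hj
      have hsplit : (1 - PowerSeries.C ((h:ℕ):ℚ) * PowerSeries.X)^m
          = (1 - PowerSeries.C ((h:ℕ):ℚ) * PowerSeries.X)^(j+1)
            * (1 - PowerSeries.C ((h:ℕ):ℚ) * PowerSeries.X)^(m-1-j) := by
        rw [← pow_add]; congr 1; omega
      have hw := Wser_inv h j
      rw [hsplit]
      calc PowerSeries.C (a i h (j+1)) * (PowerSeries.X^(j+1) * Wser h j) *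
            ((1 - PowerSeries.C ((h:ℕ):ℚ) * PowerSeries.X)^(j+1)
              * (1 - PowerSeries.C ((h:ℕ):ℚ) * PowerSeries.X)^(m-1-j))
          = PowerSeries.C (a i h (j+1)) * (PowerSeries.X^(j+1)
              * ((Wser h j * (1 - PowerSeries.C ((h:ℕ):ℚ) * PowerSeries.X)^(j+1))
                * (1 - PowerSeries.C ((h:ℕ):ℚ) * PowerSeries.X)^(m-1-j))) := by ring
        _ = _ := by rw [hw, one_mul]
    calc ∑ h ∈ range (n+2), (∑ j ∈ range m,
            PowerSeries.C (a i h (j+1)) * (PowerSeries.X^(j+1) * Wser h j)) * (U : PowerSeries ℚ)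
        = ∑ h ∈ range (n+2), ∑ j ∈ range m,
            PowerSeries.C (a i h (j+1)) *
              (PowerSeries.X^(j+1)
                * (1 - PowerSeries.C ((h:ℕ):ℚ) * PowerSeries.X)^(m-1-j)
                * ∏ h' ∈ (range (n+2)).erase h,
                    (1 - PowerSeries.C ((h':ℕ):ℚ) * PowerSeries.X)^m) := by
          refine Finset.sum_congr rfl fun h hh => ?_
          rw [Finset.sum_mul]
          refine Finset.sum_congr rfl fun j hj => ?_
          rw [hUval, ← Finset.mul_prod_erase _ _ hh, ← mul_assoc, ← mul_assoc,
            mul_assoc (PowerSeries.C (a i h (j+1))) _ _, hterm h hh j hj]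
          ring
        _ = _ := by rw [← hps]
  -- divisibility
  have hdvd : (PowerSeries.X : PowerSeries ℚ) ^ (m*(n+1)+i) ∣ S := by
    have hS : S = PowerSeries.X ^ (m*(n+1)+i)
        * ((1 - PowerSeries.C ((n+1 : ℕ) : ℚ) * PowerSeries.X) ^ (m - i) * (↑U⁻¹ : PowerSeries ℚ)) := by
      rw [← mul_assoc, Units.eq_mul_inv_iff_mul_eq, hSU]
    exact Dvd.intro _ hS.symm
  have hco : PowerSeries.coeff (k+1) S = 0 := by
    have := PowerSeries.X_pow_dvd_iff.mp hdvd (k+1) (by omega)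
    exact this
  rw [hSdef] at hco
  simp only [map_sum] at hco
  rw [← hco]
  refine Finset.sum_congr rfl fun h hh => Finset.sum_congr rfl fun j hj => ?_
  rw [PowerSeries.coeff_C_mul]
  rcases le_or_gt j k with hjk | hjk
  · rw [show k + 1 = (k - j) + (j+1) by omega, PowerSeries.coeff_X_pow_mul, coeff_Wser,
      show j + (k - j) = k by omega]
    ring
  · rw [Nat.choose_eq_zero_of_lt hjk]
    have : PowerSeries.coeff (k+1) (PowerSeries.X^(j+1) * Wser h j) = 0 := by
      have hdvd2 : (PowerSeries.X : PowerSeries ℚ)^(j+1) ∣ PowerSeries.X^(j+1) * Wser h j :=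
        Dvd.intro _ rfl
      exact PowerSeries.X_pow_dvd_iff.mp hdvd2 (k+1) (by omega)
    rw [this]
    ring
end


lemma coeff_exp_pow (h k : ℕ) :
    PowerSeries.coeff k ((PowerSeries.exp ℚ)^h) = (h:ℚ)^k * ((k.factorial : ℚ))⁻¹ := by
  rw [PowerSeries.exp_pow_eq_rescale_exp, PowerSeries.coeff_rescale, PowerSeries.coeff_exp]
  simp [one_div]

lemma aeval_padeA (n : ℕ) (a : ℕ → ℕ → ℕ → ℚ) (i j : ℕ) :
    Polynomial.aeval (PowerSeries.exp ℚ - 1) (padeA n a i j)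
      = PowerSeries.C ((j.factorial : ℚ))⁻¹ *
          ∑ h ∈ range (n+2), PowerSeries.C (a i h (j+1)) * (PowerSeries.exp ℚ)^h := by
  rw [padeA, map_mul, map_sum]
  have h1 : ∀ h : ℕ, Polynomial.aeval (PowerSeries.exp ℚ - 1)
      (Polynomial.C (a i h (j+1)) * (1+X)^h)
      = PowerSeries.C (a i h (j+1)) * (PowerSeries.exp ℚ)^h := by
    intro h
    rw [map_mul, map_pow, aeval_C, map_add, map_one, aeval_X,
      show (1 + (PowerSeries.exp ℚ - 1)) = PowerSeries.exp ℚ from by ring]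
    simp [PowerSeries.algebraMap_apply]
  rw [Finset.sum_congr rfl fun h _ => h1 h, aeval_C]
  simp [PowerSeries.algebraMap_apply]

lemma Fcoeff (m n i : ℕ) (a : ℕ → ℕ → ℕ → ℚ)
    (hmom : ∀ k, k < m*(n+1) →
      ∑ h ∈ range (n+2), ∑ j ∈ range m,
        a i h (j+1) * (k.choose j : ℕ) * ((h:ℕ):ℚ)^(k-j) = 0) :
    ∀ k, k < m*(n+1) →
      PowerSeries.coeff k (∑ j ∈ range m,
        PowerSeries.X^j * Polynomial.aeval (PowerSeries.exp ℚ - 1) (padeA n a i j)) = 0 := by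
  intro k hk
  rw [map_sum]
  have hstep : ∀ j ∈ range m,
      PowerSeries.coeff k (PowerSeries.X^j *
          Polynomial.aeval (PowerSeries.exp ℚ - 1) (padeA n a i j))
        = ∑ h ∈ range (n+2),
            ((k.factorial : ℚ))⁻¹ * (a i h (j+1) * (k.choose j : ℕ) * ((h:ℕ):ℚ)^(k-j)) := by
    intro j hj
    rw [PowerSeries.coeff_X_pow_mul', aeval_padeA]
    rcases le_or_gt j k with hjk | hjk
    · rw [if_pos hjk, PowerSeries.coeff_C_mul, map_sum, Finset.mul_sum]
      refine Finset.sum_congr rfl fun h _ => ?_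
      rw [PowerSeries.coeff_C_mul, coeff_exp_pow]
      have hcf : ((k.choose j : ℕ):ℚ) * (j.factorial:ℚ) * ((k-j).factorial:ℚ)
          = (k.factorial : ℚ) := by
        exact_mod_cast congrArg (Nat.cast (R := ℚ))
          (Nat.choose_mul_factorial_mul_factorial hjk)
      have hj0 : (j.factorial:ℚ) ≠ 0 := Nat.cast_ne_zero.mpr (Nat.factorial_ne_zero _)
      have hkj0 : ((k-j).factorial:ℚ) ≠ 0 := Nat.cast_ne_zero.mpr (Nat.factorial_ne_zero _)
      have hk0 : (k.factorial:ℚ) ≠ 0 := Nat.cast_ne_zero.mpr (Nat.factorial_ne_zero _)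
      field_simp
      linear_combination (-(a i h (j+1) * ((h:ℕ):ℚ)^(k-j))) * hcf
    · rw [if_neg (by omega)]
      rw [eq_comm]
      refine Finset.sum_eq_zero fun h _ => ?_
      rw [Nat.choose_eq_zero_of_lt hjk]
      push_cast
      ring
  rw [Finset.sum_congr rfl hstep,
    Finset.sum_congr rfl (fun j (_ : j ∈ range m) => (Finset.mul_sum (range (n+2))
      (fun h => a i h (j+1) * (k.choose j : ℕ) * ((h:ℕ):ℚ)^(k-j)) (((k.factorial : ℚ))⁻¹)).symm),
    ← Finset.mul_sum, Finset.sum_comm, hmom k hk, mul_zero]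

lemma cc_aeval (p : ℚ[X]) :
    PowerSeries.constantCoeff (Polynomial.aeval (PowerSeries.exp ℚ - 1) p) = p.coeff 0 := by
  induction p using Polynomial.induction_on' with
  | add p q hp hq => rw [map_add, map_add, hp, hq, coeff_add]
  | monomial d c =>
    rw [Polynomial.aeval_monomial, map_mul, map_pow, map_sub, map_one,
      PowerSeries.constantCoeff_exp, sub_self, Polynomial.coeff_monomial]
    rcases Nat.eq_zero_or_pos d with h0 | hpos
    · subst h0; simp [PowerSeries.algebraMap_apply]
    · rw [zero_pow (by omega), mul_zero, if_neg (by omega)]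

lemma exp_sub_one_eq : PowerSeries.exp ℚ - 1
    = PowerSeries.X * PowerSeries.mk (fun d => (((d+1).factorial : ℚ))⁻¹) := by
  ext d
  rcases d with _ | d
  · simp [PowerSeries.coeff_zero_X_mul, PowerSeries.coeff_exp, PowerSeries.coeff_one]
  · rw [map_sub, PowerSeries.coeff_succ_X_mul, PowerSeries.coeff_mk, PowerSeries.coeff_exp,
      PowerSeries.coeff_one, if_neg (by omega)]
    simp [one_div]

lemma transfer : ∀ (k : ℕ) (p : ℚ[X]),
    (PowerSeries.X : PowerSeries ℚ)^k ∣ Polynomial.aeval (PowerSeries.exp ℚ - 1) p →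
      (X : ℚ[X])^k ∣ p := by
  intro k
  induction k with
  | zero => intro p _; simpa using one_dvd p
  | succ k IH =>
    intro p hdvd
    have hXdvd : (X : ℚ[X]) ∣ p := by
      rw [Polynomial.X_dvd_iff, ← cc_aeval]
      rw [← PowerSeries.X_dvd_iff]
      exact dvd_trans (dvd_pow_self _ (Nat.succ_ne_zero k)) hdvd
    obtain ⟨q, rfl⟩ := hXdvd
    rw [map_mul, Polynomial.aeval_X] at hdvd
    set u : PowerSeries ℚ := PowerSeries.mk (fun d => (((d+1).factorial : ℚ))⁻¹) with hu
    have huu : IsUnit u := by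
      rw [PowerSeries.isUnit_iff_constantCoeff]
      have : PowerSeries.constantCoeff u = 1 := by
        rw [hu, ← PowerSeries.coeff_zero_eq_constantCoeff_apply, PowerSeries.coeff_mk]
        simp
      rw [this]; exact isUnit_one
    have h2 : (PowerSeries.X : PowerSeries ℚ)^k ∣ u * Polynomial.aeval (PowerSeries.exp ℚ - 1) q := by
      have h3 : PowerSeries.X * PowerSeries.X^k ∣ PowerSeries.X *
          (u * Polynomial.aeval (PowerSeries.exp ℚ - 1) q) := by
        rw [show PowerSeries.X * (u * Polynomial.aeval (PowerSeries.exp ℚ - 1) q)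
          = (PowerSeries.exp ℚ - 1) * Polynomial.aeval (PowerSeries.exp ℚ - 1) q from by
            rw [exp_sub_one_eq, ← hu]; ring, ← pow_succ']
        exact hdvd
      exact (mul_dvd_mul_iff_left (PowerSeries.X_ne_zero : (PowerSeries.X : PowerSeries ℚ) ≠ 0)).mp h3
    have h4 : (PowerSeries.X : PowerSeries ℚ)^k ∣ Polynomial.aeval (PowerSeries.exp ℚ - 1) q :=
      (IsUnit.dvd_mul_left huu).mp h2
    rw [pow_succ']
    exact mul_dvd_mul_left X (IH q h4)


/-- the determinant `Δ^{(n+1)}(z) = det(A_{i,j,n+1}(z))` equals `γ·z^{m(n+1)}`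
for some nonzero rational `γ`; in particular it does not vanish at any nonzero algebraic
number. -/
theorem pade_det_log (m n : ℕ) (hm : 2 ≤ m) (a : ℕ → ℕ → ℕ → ℚ) (ha : IsPFD m n a) :
    ∃ γ : ℚ, γ ≠ 0 ∧
      Matrix.det (Matrix.of fun i j : Fin m => padeA n a ((i : ℕ) + 1) (j : ℕ)) =
        Polynomial.C γ * Polynomial.X ^ (m * (n + 1)) ∧
      ∀ α : ℂ, α ≠ 0 → IsAlgebraic ℚ α →
        Polynomial.aeval α
            (Matrix.det (Matrix.of fun i j : Fin m => padeA n a ((i : ℕ) + 1) (j : ℕ))) ≠ 0 := by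
  classical
  set N := m * (n + 1) with hN
  set M : Matrix (Fin m) (Fin m) ℚ[X] :=
    Matrix.of (fun i j : Fin m => padeA n a ((i:ℕ)+1) (j:ℕ)) with hMdef
  have hatop := fun (i : ℕ) (h1 : 1 ≤ i) (h2 : i ≤ m) =>
    a_top m n i a h1 h2 (pfd_shift m n i h1 h2 a (ha i h1 h2))
  have hmom := fun (i : ℕ) (h1 : 1 ≤ i) (h2 : i ≤ m) =>
    moments m n i h1 h2 a (pfd_reflect m n i h1 h2 a (ha i h1 h2))
  -- degree bound
  have h1X : (1 + X : ℚ[X]).natDegree = 1 := by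
    rw [add_comm]
    exact natDegree_X_add_C 1
  have hdeg : ∀ i j : ℕ, (padeA n a i j).natDegree ≤ n+1 := by
    intro i j
    rw [padeA]
    refine le_trans natDegree_mul_le ?_
    rw [natDegree_C, zero_add]
    refine natDegree_sum_le_of_forall_le _ _ (fun h hh => ?_)
    refine le_trans natDegree_mul_le ?_
    rw [natDegree_C, zero_add]
    refine le_trans natDegree_pow_le ?_
    rw [h1X, mul_one]
    rw [mem_range] at hh
    omega
  -- top coefficient
  have hcoeffTop : ∀ i j : ℕ,
      (padeA n a i j).coeff (n+1) = ((j.factorial:ℚ))⁻¹ * a i (n+1) (j+1) := by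
    intro i j
    rw [padeA, coeff_C_mul, finset_sum_coeff, Finset.sum_range_succ]
    have hz : ∀ h ∈ range (n+1), (C (a i h (j+1)) * (1+X)^h).coeff (n+1) = 0 := by
      intro h hh
      rw [coeff_C_mul, coeff_one_add_X_pow,
        Nat.choose_eq_zero_of_lt (by rw [mem_range] at hh; omega)]
      simp
    rw [Finset.sum_eq_zero hz, zero_add, coeff_C_mul, coeff_one_add_X_pow, Nat.choose_self,
      Nat.cast_one, mul_one]
  -- B matrix and its determinant
  set B : Matrix (Fin m) (Fin m) ℚ :=
    Matrix.of (fun i j : Fin m => (M i j).coeff (n+1)) with hBdef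
  have hfact_ne : ∀ j : ℕ, ((j.factorial:ℚ)) ≠ 0 :=
    fun j => Nat.cast_ne_zero.mpr (Nat.factorial_ne_zero _)
  have hBe : ∀ i j : Fin m,
      B i j = (((j:ℕ).factorial:ℚ))⁻¹ * a ((i:ℕ)+1) (n+1) ((j:ℕ)+1) :=
    fun i j => hcoeffTop _ _
  have hBtri : ∀ i j : Fin m, i < j → B i j = 0 := by
    intro i j hij
    rw [hBe]
    have hz := (hatop ((i:ℕ)+1) (by omega) (by have := i.isLt; omega)).1 (j:ℕ)
      (by have := Fin.lt_iff_val_lt_val.mp hij; omega) j.isLt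
    rw [hz, mul_zero]
  have hBdiag : ∀ i : Fin m, B i i ≠ 0 := by
    intro i
    rw [hBe, (hatop ((i:ℕ)+1) (by omega) (by have := i.isLt; omega)).2]
    exact mul_ne_zero (inv_ne_zero (hfact_ne _)) (inv_ne_zero (pow_ne_zero _ (hfact_ne _)))
  have hdetB : B.det ≠ 0 := by
    rw [Matrix.det_of_lowerTriangular B (fun i j hij => hBtri i j hij)]
    exact Finset.prod_ne_zero_iff.mpr fun i _ => hBdiag i
  -- coefficient of the determinant at N
  have hcoeffdet : (M.det).coeff N = B.det := by
    rw [Matrix.det_apply', Matrix.det_apply', finset_sum_coeff]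
    refine Finset.sum_congr rfl fun σ _ => ?_
    rw [← C_eq_intCast, coeff_C_mul]
    congr 1
    have hcp := Polynomial.coeff_prod_of_natDegree_le
      (s := (Finset.univ : Finset (Fin m))) (f := fun i => M (σ i) i) (n := n+1)
      (fun p _ => hdeg _ _)
    rw [Finset.card_univ, Fintype.card_fin] at hcp
    exact hcp
  have hdegdet : (M.det).natDegree ≤ N := by
    rw [Matrix.det_apply']
    refine natDegree_sum_le_of_forall_le _ _ fun σ _ => ?_
    refine le_trans natDegree_mul_le ?_
    rw [natDegree_intCast, zero_add]
    refine le_trans (natDegree_prod_le Finset.univ (fun i => M (σ i) i)) ?_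
    refine le_trans (Finset.sum_le_sum (fun i (_ : i ∈ Finset.univ) => hdeg ((σ i : ℕ)+1) (i:ℕ))) ?_
    rw [Finset.sum_const, Finset.card_univ, Fintype.card_fin, smul_eq_mul]
  -- divisibility by X^N
  set φ : ℚ[X] →+* PowerSeries ℚ :=
    (Polynomial.aeval (PowerSeries.exp ℚ - 1) : ℚ[X] →ₐ[ℚ] PowerSeries ℚ).toRingHom with hφdef
  set Mφ : Matrix (Fin m) (Fin m) (PowerSeries ℚ) := M.map φ with hMφdef
  have hmapdet : φ M.det = Mφ.det := RingHom.map_det φ M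
  set Fcol : Fin m → PowerSeries ℚ :=
    fun i0 => ∑ j : Fin m, PowerSeries.X^(j:ℕ) * Mφ i0 j with hFcoldef
  have hFcol2 : ∀ i0 : Fin m, Fcol i0 = ∑ j ∈ range m,
      PowerSeries.X^j * Polynomial.aeval (PowerSeries.exp ℚ - 1) (padeA n a ((i0:ℕ)+1) j) := by
    intro i0
    rw [hFcoldef]
    exact Fin.sum_univ_eq_sum_range
      (fun j => PowerSeries.X^j * Polynomial.aeval (PowerSeries.exp ℚ - 1)
        (padeA n a ((i0:ℕ)+1) j)) m
  have hdvdF : ∀ i0 : Fin m, (PowerSeries.X : PowerSeries ℚ)^N ∣ Fcol i0 := by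
    intro i0
    rw [hFcol2, PowerSeries.X_pow_dvd_iff]
    intro d hd
    exact Fcoeff m n ((i0:ℕ)+1) a
      (hmom ((i0:ℕ)+1) (by omega) (by have := i0.isLt; omega)) d hd
  choose G hG using fun i0 => (hdvdF i0)
  have hm0 : 0 < m := by omega
  have hdet1 : (Mφ.updateCol ⟨0, hm0⟩ Fcol).det = Mφ.det := by
    have hcolrw : Fcol = fun i0 => ∑ j ∈ (Finset.univ : Finset (Fin m)),
        (fun (jj : Fin m) (i : Fin m) => PowerSeries.X^(jj:ℕ) * Mφ i jj) j i0 := by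
      funext i0; rw [hFcoldef]
    rw [hcolrw, det_updCol_sum, Finset.sum_eq_single (⟨0, hm0⟩ : Fin m)]
    · have : (fun i : Fin m => PowerSeries.X^((⟨0,hm0⟩ : Fin m):ℕ) * Mφ i ⟨0,hm0⟩)
          = fun i => Mφ i ⟨0,hm0⟩ := by
        funext i; simp
      rw [this, Matrix.updateCol_eq_self]
    · intro j _ hj
      have hsmul : (fun i : Fin m => PowerSeries.X^(j:ℕ) * Mφ i j)
          = (PowerSeries.X^(j:ℕ) : PowerSeries ℚ) • (fun i => Mφ i j) := by
        funext i; simp [smul_eq_mul]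
      rw [hsmul, Matrix.det_updateCol_smul,
        Matrix.det_zero_of_column_eq (Ne.symm hj)
          (fun k => by simp [Matrix.updateCol_apply, hj]), mul_zero]
    · intro habs
      exact absurd (Finset.mem_univ _) habs
  have hdet2 : (Mφ.updateCol ⟨0, hm0⟩ Fcol).det
      = PowerSeries.X^N * (Mφ.updateCol ⟨0, hm0⟩ G).det := by
    rw [show Fcol = ((PowerSeries.X : PowerSeries ℚ)^N) • G from funext fun i0 => by
      rw [Pi.smul_apply, smul_eq_mul, ← hG i0]]
    exact Matrix.det_updateCol_smul Mφ _ _ G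
  have hdvdPS : (PowerSeries.X : PowerSeries ℚ)^N ∣ Mφ.det :=
    ⟨(Mφ.updateCol ⟨0, hm0⟩ G).det, by rw [← hdet1, hdet2]⟩
  have hdvdpoly : (X : ℚ[X])^N ∣ M.det := by
    refine transfer N M.det ?_
    rw [show Polynomial.aeval (PowerSeries.exp ℚ - 1) M.det = φ M.det from rfl, hmapdet]
    exact hdvdPS
  -- assembly
  obtain ⟨q, hq⟩ := hdvdpoly
  have hMdetne : M.det ≠ 0 := by
    intro h0
    rw [h0, coeff_zero] at hcoeffdet
    exact hdetB hcoeffdet.symm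
  have hqne : q ≠ 0 := by
    intro h0
    rw [h0, mul_zero] at hq
    exact hMdetne hq
  have hdegq : q.natDegree = 0 := by
    have := hdegdet
    rw [hq, natDegree_mul (pow_ne_zero _ X_ne_zero) hqne, natDegree_X_pow] at this
    omega
  have hqC : q = C (q.coeff 0) := eq_C_of_natDegree_eq_zero hdegq
  have hgne : q.coeff 0 ≠ 0 := by
    intro h0
    exact hqne (by rw [hqC, h0, map_zero])
  refine ⟨q.coeff 0, hgne, ?_, ?_⟩
  · show M.det = _
    conv_lhs => rw [hq, hqC]
    ring
  · intro α hα _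
    show Polynomial.aeval α M.det ≠ 0
    conv_lhs => rw [hq, hqC]
    rw [map_mul, map_pow, aeval_X, aeval_C]
    refine mul_ne_zero (pow_ne_zero _ hα) ?_
    exact fun hc => hgne ((algebraMap ℚ ℂ).injective (by rw [hc, map_zero]))
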